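/- Let J be a partial Steiner system S_p(k-1,k,n), let (a_J)_{J∈J} be complex coefficients, and for z ∈ ℂⁿ with ‖z‖₂ ≤ 1 define Y_z(ε) = (1/k) ∑_{J∈J} ε_J a_J z_J, where (ε_J) are independent Rademacher (±1) random variables and z_J = ∏_{j∈J} z_j. Then for all z, z' in the ℓ² unit ball, the L² norm satisfies ‖Y_z − Y_{z'}‖_{L²} ≤ (max_{J∈J} |a_J|) · ‖z − z'‖_∞. -/

import Mathlib

open Finset

lemma mySignSum (ι : Type*) [Fintype ι] [DecidableEq ι] (i j : ι) :
    ∑ s : ι → Bool, ((if s i then (1:ℂ) else -1) * (if s j then (1:ℂ) else -1)) =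
      if i = j then 2 ^ Fintype.card ι else 0 := by
  by_cases hij : i = j
  · subst hij
    have h1 : ∀ s : ι → Bool, ((if s i then (1:ℂ) else -1) * (if s i then (1:ℂ) else -1)) = 1 := by
      intro s; cases s i <;> norm_num
    simp only [h1, if_pos rfl, Finset.sum_const, Finset.card_univ, nsmul_eq_mul, mul_one]
    rw [Fintype.card_fun]
    push_cast
    simp
  · rw [if_neg hij]
    apply Finset.sum_ninvolution (fun s => Function.update s i (!s i))
    · intro s
      have h1 : Function.update s i (!s i) i = !s i := Function.update_self _ _ _
      have h2 : Function.update s i (!s i) j = s j := Function.update_of_ne (Ne.symm hij) _ _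
      rw [h1, h2]
      cases s i <;> cases s j <;> norm_num
    · intro s _ h
      have := congrFun h i
      rw [Function.update_self] at this
      cases hsi : s i <;> rw [hsi] at this <;> simp at this
    · intro s; exact Finset.mem_univ _
    · intro s
      funext x
      by_cases hx : x = i
      · subst hx; simp
      · simp [Function.update_of_ne hx]

lemma myOrth {ι : Type*} [Fintype ι] [DecidableEq ι] (c : ι → ℂ) :
    ∑ s : ι → Bool, ‖∑ i, (if s i then (1:ℂ) else -1) * c i‖ ^ 2
      = 2 ^ Fintype.card ι * ∑ i, ‖c i‖ ^ 2 := by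
  have key : ∑ s : ι → Bool, ((∑ i, (if s i then (1:ℂ) else -1) * c i) *
      (starRingEnd ℂ) (∑ i, (if s i then (1:ℂ) else -1) * c i))
      = 2 ^ Fintype.card ι * ∑ i, (c i * (starRingEnd ℂ) (c i)) := by
    have conj_sign : ∀ (s : ι → Bool) (j : ι),
        (starRingEnd ℂ) (if s j then (1:ℂ) else -1) = (if s j then (1:ℂ) else -1) := by
      intro s j; cases s j <;> simp
    calc ∑ s : ι → Bool, ((∑ i, (if s i then (1:ℂ) else -1) * c i) *
          (starRingEnd ℂ) (∑ i, (if s i then (1:ℂ) else -1) * c i))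
        = ∑ s : ι → Bool, ∑ i, ∑ j,
            ((if s i then (1:ℂ) else -1) * (if s j then (1:ℂ) else -1)) *
              (c i * (starRingEnd ℂ) (c j)) := by
          refine Finset.sum_congr rfl fun s _ => ?_
          rw [map_sum, Finset.sum_mul_sum]
          refine Finset.sum_congr rfl fun i _ => Finset.sum_congr rfl fun j _ => ?_
          rw [map_mul, conj_sign]
          ring
      _ = ∑ i, ∑ j, (∑ s : ι → Bool,
            ((if s i then (1:ℂ) else -1) * (if s j then (1:ℂ) else -1))) *
              (c i * (starRingEnd ℂ) (c j)) := by
          rw [Finset.sum_comm]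
          refine Finset.sum_congr rfl fun i _ => ?_
          rw [Finset.sum_comm]
          refine Finset.sum_congr rfl fun j _ => ?_
          rw [Finset.sum_mul]
      _ = ∑ i, ∑ j, (if i = j then (2:ℂ) ^ Fintype.card ι else 0) *
              (c i * (starRingEnd ℂ) (c j)) := by
          simp_rw [mySignSum]
      _ = 2 ^ Fintype.card ι * ∑ i, (c i * (starRingEnd ℂ) (c i)) := by
          rw [Finset.mul_sum]
          refine Finset.sum_congr rfl fun i _ => ?_
          rw [Finset.sum_eq_single i]
          · rw [if_pos rfl]
          · intro j _ hji; rw [if_neg (Ne.symm hji), zero_mul]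
          · intro h; exact absurd (Finset.mem_univ i) h
  have h2 : ∀ x : ℂ, x * (starRingEnd ℂ) x = ((‖x‖ ^ 2 : ℝ) : ℂ) := by
    intro x
    rw [Complex.mul_conj]
    norm_cast
    rw [← Complex.sq_norm]
  simp_rw [h2] at key
  have := key
  rw [← Complex.ofReal_sum, ← Complex.ofReal_sum] at this
  have h3 : ((∑ s : ι → Bool, ‖∑ i, (if s i then (1:ℂ) else -1) * c i‖ ^ 2 : ℝ) : ℂ)
      = ((2 ^ Fintype.card ι * ∑ i, ‖c i‖ ^ 2 : ℝ) : ℂ) := by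
    rw [this]
    push_cast
    ring
  exact_mod_cast h3

lemma myTelescope {ι : Type*} [DecidableEq ι] (J : Finset ι) (f g : ι → ℂ) :
    ‖∏ j ∈ J, f j - ∏ j ∈ J, g j‖ ≤
      ∑ u ∈ J, ‖f u - g u‖ * ∏ j ∈ J.erase u, max ‖f j‖ ‖g j‖ := by
  induction J using Finset.induction_on with
  | empty => simp
  | @insert a J ha ih =>
    have hsplit : ∏ j ∈ insert a J, f j - ∏ j ∈ insert a J, g j
        = (f a - g a) * ∏ j ∈ J, f j + g a * (∏ j ∈ J, f j - ∏ j ∈ J, g j) := by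
      rw [Finset.prod_insert ha, Finset.prod_insert ha]; ring
    rw [hsplit, Finset.sum_insert ha, Finset.erase_insert ha]
    refine (norm_add_le _ _).trans ?_
    gcongr ?_ + ?_
    · rw [norm_mul]
      refine mul_le_mul_of_nonneg_left ?_ (norm_nonneg _)
      refine (Finset.norm_prod_le _ _).trans ?_
      exact Finset.prod_le_prod (fun i _ => norm_nonneg _) (fun i _ => le_max_left _ _)
    · rw [norm_mul]
      refine (mul_le_mul (le_max_right ‖f a‖ ‖g a‖) ih (norm_nonneg _)
        (le_trans (norm_nonneg _) (le_max_left _ _))).trans ?_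
      rw [Finset.mul_sum]
      apply Finset.sum_le_sum
      intro u hu
      have hau : a ≠ u := fun h => ha (h ▸ hu)
      rw [Finset.erase_insert_of_ne hau, Finset.prod_insert (fun h => ha (Finset.mem_of_mem_erase h))]
      ring_nf
      exact le_refl _

lemma myPowAux (m : ℕ) {x y : ℝ} (hx : 0 ≤ x) (hy : 0 ≤ y) :
    x ^ (m + 1) + (m + 1) * y * x ^ m ≤ (x + y) ^ (m + 1) := by
  induction m with
  | zero => simp
  | succ m ih =>
    have hxm : (0:ℝ) ≤ x ^ m := pow_nonneg hx m
    have hxm1 : (0:ℝ) ≤ x ^ (m+1) := pow_nonneg hx (m+1)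
    have ih' : x ^ m * x + ((m:ℝ) + 1) * y * x ^ m ≤ (x + y) ^ m * (x + y) := by
      rw [← pow_succ, ← pow_succ]
      push_cast at ih ⊢
      exact ih
    have h2 : (x ^ m * x + ((m:ℝ) + 1) * y * x ^ m) * (x + y)
        ≤ (x + y) ^ m * (x + y) * (x + y) :=
      mul_le_mul_of_nonneg_right ih' (by linarith)
    simp only [pow_succ]
    push_cast
    nlinarith [mul_nonneg (Nat.cast_nonneg (α := ℝ) m) (mul_nonneg hy (mul_nonneg hy hxm)),
      mul_nonneg hy (mul_nonneg hy hxm)]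

lemma myEsymm {ι : Type*} [DecidableEq ι] (w : ι → ℝ) (s : Finset ι) (hw : ∀ i ∈ s, 0 ≤ w i) :
    ∀ m : ℕ, (m.factorial : ℝ) * ∑ B ∈ s.powersetCard m, ∏ j ∈ B, w j ≤ (∑ j ∈ s, w j) ^ m := by
  induction s using Finset.induction_on with
  | empty =>
    intro m
    cases m with
    | zero => simp
    | succ m =>
      rw [Finset.powersetCard_eq_empty.mpr (by simp)]
      simp
  | @insert a s ha ih =>
    have hwa : 0 ≤ w a := hw a (Finset.mem_insert_self a s)
    have hws : ∀ i ∈ s, 0 ≤ w i := fun i hi => hw i (Finset.mem_insert_of_mem hi)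
    have ihs := ih hws
    have hS : 0 ≤ ∑ j ∈ s, w j := Finset.sum_nonneg hws
    intro m
    cases m with
    | zero => simp
    | succ m =>
      rw [Finset.powersetCard_succ_insert ha, Finset.sum_union, Finset.sum_image]
      · have hprod : ∀ B ∈ s.powersetCard m, ∏ j ∈ insert a B, w j = w a * ∏ j ∈ B, w j := by
          intro B hB
          have hB' := (Finset.mem_powersetCard.mp hB).1
          exact Finset.prod_insert (fun h => ha (hB' h))
        rw [Finset.sum_congr rfl hprod, ← Finset.mul_sum, Finset.sum_insert ha]
        have e0 : 0 ≤ ∑ B ∈ s.powersetCard m, ∏ j ∈ B, w j :=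
          Finset.sum_nonneg fun B hB => Finset.prod_nonneg fun j hj =>
            hws j ((Finset.mem_powersetCard.mp hB).1 hj)
        have key1 := ihs (m+1)
        have key2 := ihs m
        have hfac : ((m+1).factorial : ℝ) = (m+1) * m.factorial := by
          rw [Nat.factorial_succ]; push_cast; ring
        have step : ((m+1).factorial : ℝ) * (∑ B ∈ s.powersetCard (m+1), ∏ j ∈ B, w j
              + w a * ∑ B ∈ s.powersetCard m, ∏ j ∈ B, w j)
            ≤ (∑ j ∈ s, w j) ^ (m+1) + (m+1) * w a * (∑ j ∈ s, w j) ^ m := by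
          rw [mul_add, hfac]
          refine add_le_add ?_ ?_
          · calc ((m+1) * m.factorial : ℝ) * ∑ B ∈ s.powersetCard (m+1), ∏ j ∈ B, w j
                = ((m+1).factorial : ℝ) * ∑ B ∈ s.powersetCard (m+1), ∏ j ∈ B, w j := by
                  rw [hfac]
              _ ≤ _ := key1
          · calc ((m+1) * m.factorial : ℝ) * (w a * ∑ B ∈ s.powersetCard m, ∏ j ∈ B, w j)
                = (m+1) * w a * ((m.factorial : ℝ) * ∑ B ∈ s.powersetCard m, ∏ j ∈ B, w j) := by
                  ring
              _ ≤ (m+1) * w a * (∑ j ∈ s, w j) ^ m := by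
                  refine mul_le_mul_of_nonneg_left key2 ?_
                  positivity
        calc ((m+1).factorial : ℝ) * (∑ B ∈ s.powersetCard (m+1), ∏ j ∈ B, w j
              + w a * ∑ B ∈ s.powersetCard m, ∏ j ∈ B, w j)
            ≤ (∑ j ∈ s, w j) ^ (m+1) + (m+1) * w a * (∑ j ∈ s, w j) ^ m := step
          _ ≤ ((∑ j ∈ s, w j) + w a) ^ (m+1) := myPowAux m hS hwa
          _ = (w a + ∑ j ∈ s, w j) ^ (m+1) := by ring
      · intro B hB B' hB' hBB'
        have h1 := (Finset.mem_powersetCard.mp hB).1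
        have h2 := (Finset.mem_powersetCard.mp hB').1
        have haB : a ∉ B := fun h => ha (h1 h)
        have haB' : a ∉ B' := fun h => ha (h2 h)
        rw [← Finset.erase_insert haB, ← Finset.erase_insert haB', hBB']
      · rw [Finset.disjoint_right]
        intro B hB hB2
        obtain ⟨B', hB', rfl⟩ := Finset.mem_image.mp hB
        have := (Finset.mem_powersetCard.mp hB2).1
        exact ha (this (Finset.mem_insert_self a B'))

lemma myTwoPowLeFac (k : ℕ) (hk : 1 ≤ k) : (2:ℝ) ^ (k - 1) ≤ k * (k-1).factorial := by
  have : ∀ m : ℕ, (2:ℝ) ^ m ≤ (m + 1) * m.factorial := by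
    intro m
    induction m with
    | zero => norm_num
    | succ m ih =>
      have hf : (((m+1).factorial : ℕ) : ℝ) = ((m:ℝ)+1) * m.factorial := by
        rw [Nat.factorial_succ]; push_cast; ring
      have hfpos : (0:ℝ) ≤ ((m:ℝ)+1) * m.factorial := by positivity
      have hdouble : (2:ℝ) * 2 ^ m ≤ 2 * (((m:ℝ)+1) * m.factorial) :=
        mul_le_mul_of_nonneg_left ih (by norm_num)
      rw [pow_succ]
      push_cast [hf]
      nlinarith [mul_nonneg (Nat.cast_nonneg (α := ℝ) m) hfpos]
  have h := this (k - 1)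
  have hk1 : (k - 1 : ℕ) + 1 = k := Nat.succ_pred_eq_of_pos hk
  have hc : ((k:ℝ)) = ((k-1:ℕ):ℝ) + 1 := by exact_mod_cast hk1.symm
  rw [hc]
  exact h

/-- Lipschitz estimate for the Rademacher process `Y_z = (1/k) ∑_{J∈𝒥} ε_J a_J z_J`
indexed by the `ℓ²` unit ball, where `𝒥` is a partial Steiner system `S_p(k-1,k,n)`:
the `L²` norm (over the uniform probability on sign choices) of `Y_z − Y_{z'}` is at
most `(max_J |a_J|) · ‖z − z'‖_∞`. -/
theorem rademacher_process_lipschitz (n k : ℕ) (hk : 1 ≤ k)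
    (𝒥 : Finset (Finset (Fin n)))
    (hcard : ∀ J ∈ 𝒥, J.card = k)
    (hSteiner : ∀ A : Finset (Fin n), A.card = k - 1 →
      (𝒥.filter fun J => A ⊆ J).card ≤ 1)
    (a : Finset (Fin n) → ℂ) (A δ : ℝ) (hA0 : 0 ≤ A) (hδ0 : 0 ≤ δ)
    (hA : ∀ J ∈ 𝒥, ‖a J‖ ≤ A)
    (z z' : Fin n → ℂ)
    (hz : ∑ i, ‖z i‖ ^ 2 ≤ 1) (hz' : ∑ i, ‖z' i‖ ^ 2 ≤ 1)
    (hδ : ∀ i, ‖z i - z' i‖ ≤ δ) :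
    Real.sqrt ((∑ s : {J // J ∈ 𝒥} → Bool,
        ‖((1 / (k : ℂ)) * ∑ J ∈ 𝒥.attach,
            (if s J then (1 : ℂ) else -1) * a J.1 * ∏ j ∈ J.1, z j) -
          ((1 / (k : ℂ)) * ∑ J ∈ 𝒥.attach,
            (if s J then (1 : ℂ) else -1) * a J.1 * ∏ j ∈ J.1, z' j)‖ ^ 2) /
      2 ^ 𝒥.card) ≤ A * δ := by
  classical
  set mx : Fin n → ℝ := fun j => max ‖z j‖ ‖z' j‖ with hmx
  set w : Fin n → ℝ := fun j => ‖z j‖ ^ 2 + ‖z' j‖ ^ 2 with hwdef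
  have hw0 : ∀ j, 0 ≤ w j := fun j => by positivity
  have hmx0 : ∀ j, 0 ≤ mx j := fun j => le_trans (norm_nonneg _) (le_max_left _ _)
  have hkR : (0:ℝ) < k := by exact_mod_cast Nat.lt_of_lt_of_le Nat.zero_lt_one hk
  set c : {J // J ∈ 𝒥} → ℂ := fun J => a J.1 * (∏ j ∈ J.1, z j - ∏ j ∈ J.1, z' j) with hc
  -- step 1 : rewrite the summand
  have hterm : ∀ s : {J // J ∈ 𝒥} → Bool,
      ((1 / (k : ℂ)) * ∑ J ∈ 𝒥.attach, (if s J then (1 : ℂ) else -1) * a J.1 * ∏ j ∈ J.1, z j) -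
        ((1 / (k : ℂ)) * ∑ J ∈ 𝒥.attach, (if s J then (1 : ℂ) else -1) * a J.1 * ∏ j ∈ J.1, z' j)
      = (1 / (k : ℂ)) * ∑ J ∈ 𝒥.attach, (if s J then (1 : ℂ) else -1) * c J := by
    intro s
    rw [← mul_sub, ← Finset.sum_sub_distrib]
    congr 1
    exact Finset.sum_congr rfl fun J _ => by simp only [hc]; ring
  have hnorm1k : ‖(1 / (k:ℂ))‖ = 1 / (k:ℝ) := by
    rw [norm_div, norm_one, Complex.norm_natCast]
  have hQ : (∑ s : {J // J ∈ 𝒥} → Bool,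
        ‖((1 / (k : ℂ)) * ∑ J ∈ 𝒥.attach,
            (if s J then (1 : ℂ) else -1) * a J.1 * ∏ j ∈ J.1, z j) -
          ((1 / (k : ℂ)) * ∑ J ∈ 𝒥.attach,
            (if s J then (1 : ℂ) else -1) * a J.1 * ∏ j ∈ J.1, z' j)‖ ^ 2)
      = (1/(k:ℝ))^2 * (2 ^ 𝒥.card * ∑ J : {J // J ∈ 𝒥}, ‖c J‖ ^ 2) := by
    calc (∑ s : {J // J ∈ 𝒥} → Bool, ‖_ - _‖ ^ 2)
        = ∑ s : {J // J ∈ 𝒥} → Bool,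
            (1/(k:ℝ))^2 * ‖∑ J : {J // J ∈ 𝒥}, (if s J then (1 : ℂ) else -1) * c J‖ ^ 2 := by
          refine Finset.sum_congr rfl fun s _ => ?_
          rw [hterm s, norm_mul, mul_pow, hnorm1k, Finset.univ_eq_attach]
      _ = (1/(k:ℝ))^2 * ∑ s : {J // J ∈ 𝒥} → Bool,
            ‖∑ J : {J // J ∈ 𝒥}, (if s J then (1 : ℂ) else -1) * c J‖ ^ 2 := by
          rw [Finset.mul_sum]
      _ = (1/(k:ℝ))^2 * (2 ^ 𝒥.card * ∑ J : {J // J ∈ 𝒥}, ‖c J‖ ^ 2) := by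
          rw [myOrth c, Fintype.card_coe]
  -- step 2 : per-J bound
  have hkey : ∀ J ∈ 𝒥, ‖a J * (∏ j ∈ J, z j - ∏ j ∈ J, z' j)‖ ^ 2
      ≤ A^2 * (δ^2 * ((k:ℝ) * ∑ u ∈ J, ∏ j ∈ J.erase u, w j)) := by
    intro J hJ
    rw [norm_mul, mul_pow]
    have ha2 : ‖a J‖^2 ≤ A^2 := by
      have := hA J hJ
      nlinarith [norm_nonneg (a J)]
    have hd1 : ‖∏ j ∈ J, z j - ∏ j ∈ J, z' j‖ ≤ δ * ∑ u ∈ J, ∏ j ∈ J.erase u, mx j := by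
      refine (myTelescope J z z').trans ?_
      rw [Finset.mul_sum]
      refine Finset.sum_le_sum fun u _ => ?_
      exact mul_le_mul_of_nonneg_right (hδ u)
        (Finset.prod_nonneg fun j _ => hmx0 j)
    have hS1 : (0:ℝ) ≤ ∑ u ∈ J, ∏ j ∈ J.erase u, mx j :=
      Finset.sum_nonneg fun u _ => Finset.prod_nonneg fun j _ => hmx0 j
    have hd2 : ‖∏ j ∈ J, z j - ∏ j ∈ J, z' j‖^2
        ≤ δ^2 * (∑ u ∈ J, ∏ j ∈ J.erase u, mx j)^2 := by
      rw [← mul_pow]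
      exact pow_le_pow_left₀ (norm_nonneg _) hd1 2
    have hCS : (∑ u ∈ J, ∏ j ∈ J.erase u, mx j)^2
        ≤ (k:ℝ) * ∑ u ∈ J, (∏ j ∈ J.erase u, mx j)^2 := by
      have := sq_sum_le_card_mul_sum_sq (s := J) (f := fun u => ∏ j ∈ J.erase u, mx j)
      rwa [hcard J hJ] at this
    have hPw : ∀ u ∈ J, (∏ j ∈ J.erase u, mx j)^2 ≤ ∏ j ∈ J.erase u, w j := by
      intro u _
      rw [← Finset.prod_pow]
      refine Finset.prod_le_prod (fun j _ => by positivity) fun j _ => ?_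
      rcases le_total ‖z j‖ ‖z' j‖ with h | h
      · simp only [hmx, hwdef, max_eq_right h]
        nlinarith [norm_nonneg (z j)]
      · simp only [hmx, hwdef, max_eq_left h]
        nlinarith [norm_nonneg (z' j)]
    refine mul_le_mul ha2 ?_ (by positivity) (by positivity)
    refine hd2.trans ?_
    refine mul_le_mul_of_nonneg_left ?_ (by positivity)
    refine hCS.trans ?_
    exact mul_le_mul_of_nonneg_left (Finset.sum_le_sum hPw) (by positivity)
  -- step 3 : Steiner counting
  have hT : ∑ J ∈ 𝒥, ∑ u ∈ J, ∏ j ∈ J.erase u, w j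
      ≤ ∑ B ∈ (Finset.univ : Finset (Fin n)).powersetCard (k-1), ∏ j ∈ B, w j := by
    rw [← Finset.sum_sigma 𝒥 (fun J => J) (fun p => ∏ j ∈ p.1.erase p.2, w j)]
    have hinj : ∀ p ∈ 𝒥.sigma (fun J => J), ∀ q ∈ 𝒥.sigma (fun J => J),
        p.1.erase p.2 = q.1.erase q.2 → p = q := by
      intro p hp q hq hpq
      rw [Finset.mem_sigma] at hp hq
      have hcardB : (p.1.erase p.2).card = k - 1 := by
        rw [Finset.card_erase_of_mem hp.2, hcard _ hp.1]
      have hsub1 : p.1.erase p.2 ⊆ p.1 := Finset.erase_subset _ _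
      have hsub2 : p.1.erase p.2 ⊆ q.1 := hpq ▸ Finset.erase_subset _ _
      have h1 : p.1 ∈ 𝒥.filter (fun J => p.1.erase p.2 ⊆ J) :=
        Finset.mem_filter.mpr ⟨hp.1, hsub1⟩
      have h2 : q.1 ∈ 𝒥.filter (fun J => p.1.erase p.2 ⊆ J) :=
        Finset.mem_filter.mpr ⟨hq.1, hsub2⟩
      have hJeq : p.1 = q.1 :=
        Finset.card_le_one.mp (hSteiner _ hcardB) _ h1 _ h2
      have hueq : p.2 = q.2 := by
        by_contra hne
        have : p.2 ∈ q.1.erase q.2 :=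
          Finset.mem_erase.mpr ⟨hne, hJeq ▸ hp.2⟩
        rw [← hpq] at this
        exact (Finset.notMem_erase _ _) this
      cases p; cases q
      simp only at hJeq hueq
      subst hJeq; subst hueq; rfl
    rw [show (∑ p ∈ 𝒥.sigma (fun J => J), ∏ j ∈ p.1.erase p.2, w j)
        = ∑ B ∈ (𝒥.sigma (fun J => J)).image (fun p => p.1.erase p.2), ∏ j ∈ B, w j from
      (Finset.sum_image (f := fun B => ∏ j ∈ B, w j) hinj).symm]
    refine Finset.sum_le_sum_of_subset_of_nonneg ?_ ?_
    · intro B hB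
      obtain ⟨p, hp, rfl⟩ := Finset.mem_image.mp hB
      rw [Finset.mem_sigma] at hp
      rw [Finset.mem_powersetCard]
      constructor
      · exact fun x _ => Finset.mem_univ x
      · rw [Finset.card_erase_of_mem hp.2, hcard _ hp.1]
    · intro B _ _
      exact Finset.prod_nonneg fun j _ => hw0 j
  -- step 4 : esymm bound
  have hsumw : ∑ j, w j ≤ 2 := by
    have : ∑ j, w j = (∑ j, ‖z j‖^2) + ∑ j, ‖z' j‖^2 := by
      rw [← Finset.sum_add_distrib]
    rw [this]; linarith
  have hsumw0 : (0:ℝ) ≤ ∑ j, w j := Finset.sum_nonneg fun j _ => hw0 j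
  have hE : ∑ B ∈ (Finset.univ : Finset (Fin n)).powersetCard (k-1), ∏ j ∈ B, w j ≤ (k:ℝ) := by
    have h1 := myEsymm w Finset.univ (fun i _ => hw0 i) (k-1)
    have h2 : (∑ j, w j)^(k-1) ≤ 2^(k-1) :=
      pow_le_pow_left₀ hsumw0 hsumw (k-1)
    have h3 := myTwoPowLeFac k hk
    have hfacpos : (0:ℝ) < (k-1).factorial := by
      exact_mod_cast (k-1).factorial_pos
    have : ((k-1).factorial : ℝ) * ∑ B ∈ (Finset.univ : Finset (Fin n)).powersetCard (k-1), ∏ j ∈ B, w j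
        ≤ ((k-1).factorial : ℝ) * k := by
      calc ((k-1).factorial : ℝ) * _ ≤ (∑ j, w j)^(k-1) := h1
        _ ≤ 2^(k-1) := h2
        _ ≤ (k:ℝ) * (k-1).factorial := h3
        _ = ((k-1).factorial : ℝ) * k := by ring
    exact le_of_mul_le_mul_left this hfacpos
  -- combine
  have hEnn : (0:ℝ) ≤ ∑ B ∈ (Finset.univ : Finset (Fin n)).powersetCard (k-1), ∏ j ∈ B, w j :=
    Finset.sum_nonneg fun B _ => Finset.prod_nonneg fun j _ => hw0 j
  have hSig : ∑ J : {J // J ∈ 𝒥}, ‖c J‖^2 ≤ A^2 * δ^2 * (k:ℝ)^2 := by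
    have h1 : ∑ J : {J // J ∈ 𝒥}, ‖c J‖^2
        = ∑ J ∈ 𝒥, ‖a J * (∏ j ∈ J, z j - ∏ j ∈ J, z' j)‖^2 := by
      rw [Finset.univ_eq_attach]
      exact Finset.sum_attach 𝒥 (fun J => ‖a J * (∏ j ∈ J, z j - ∏ j ∈ J, z' j)‖^2)
    rw [h1]
    calc ∑ J ∈ 𝒥, ‖a J * (∏ j ∈ J, z j - ∏ j ∈ J, z' j)‖^2
        ≤ ∑ J ∈ 𝒥, A^2 * (δ^2 * ((k:ℝ) * ∑ u ∈ J, ∏ j ∈ J.erase u, w j)) :=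
          Finset.sum_le_sum hkey
      _ = A^2 * δ^2 * (k:ℝ) * ∑ J ∈ 𝒥, ∑ u ∈ J, ∏ j ∈ J.erase u, w j := by
          rw [Finset.mul_sum]
          exact Finset.sum_congr rfl fun J _ => by ring
      _ ≤ A^2 * δ^2 * (k:ℝ) * ∑ B ∈ (Finset.univ : Finset (Fin n)).powersetCard (k-1), ∏ j ∈ B, w j := by
          exact mul_le_mul_of_nonneg_left hT (by positivity)
      _ ≤ A^2 * δ^2 * (k:ℝ) * (k:ℝ) :=
          mul_le_mul_of_nonneg_left hE (by positivity)
      _ = A^2 * δ^2 * (k:ℝ)^2 := by ring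
  have hfinal : (∑ s : {J // J ∈ 𝒥} → Bool,
        ‖((1 / (k : ℂ)) * ∑ J ∈ 𝒥.attach,
            (if s J then (1 : ℂ) else -1) * a J.1 * ∏ j ∈ J.1, z j) -
          ((1 / (k : ℂ)) * ∑ J ∈ 𝒥.attach,
            (if s J then (1 : ℂ) else -1) * a J.1 * ∏ j ∈ J.1, z' j)‖ ^ 2) / 2 ^ 𝒥.card
      ≤ (A * δ)^2 := by
    rw [hQ]
    have h2pos : (0:ℝ) < 2 ^ 𝒥.card := by positivity
    rw [mul_comm ((2:ℝ) ^ 𝒥.card) _, ← mul_assoc, mul_div_assoc, div_self (ne_of_gt h2pos), mul_one]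
    calc (1/(k:ℝ))^2 * ∑ J : {J // J ∈ 𝒥}, ‖c J‖^2
        ≤ (1/(k:ℝ))^2 * (A^2 * δ^2 * (k:ℝ)^2) :=
          mul_le_mul_of_nonneg_left hSig (by positivity)
      _ = (A * δ)^2 := by field_simp
  have hs := Real.sqrt_le_sqrt hfinal
  rwa [Real.sqrt_sq (by positivity : (0:ℝ) ≤ A * δ)] at hs
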